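/- Let P be the orthogonal projection of ((ℂ²)^{⊗4})^{⊗N} onto the two-dimensional subspace spanned by |id⟩⟩^{⊗N} and |swap⟩⟩^{⊗N}. Then 2^N · Σ_{s∈{0,1}^N} ⟨(⊗_{i=1}^N |s_i s_i s_i s_i⟩) , P (|0000⟩^{⊗N})⟩ = 2/(1 + 2^{-N}). -/

import Mathlib

/-! STATEMENT 8: projecting |0000⟩^{⊗N} onto span{|id⟩⟩^{⊗N}, |swap⟩⟩^{⊗N}} gives 2^N Σ_s ⟨ssss|P|0000…⟩ = 2/(1+2^{-N}). -/

open Matrix Finset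

noncomputable section

/-- The single-site state |id⟩⟩ = ½(|0000⟩+|0011⟩+|1100⟩+|1111⟩) in (ℂ²)^{⊗4}. -/
def idS : (Fin 4 → Fin 2) → ℂ := fun f => if f 0 = f 1 ∧ f 2 = f 3 then 1 / 2 else 0

/-- The single-site state |swap⟩⟩ = ½(|0000⟩+|1001⟩+|0110⟩+|1111⟩) in (ℂ²)^{⊗4}. -/
def swapS : (Fin 4 → Fin 2) → ℂ := fun f => if f 0 = f 3 ∧ f 1 = f 2 then 1 / 2 else 0

/-- Basis of ((ℂ²)^{⊗4})^{⊗N}. -/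
abbrev RepIdx (N : ℕ) := Fin N → Fin 4 → Fin 2

/-- The product state |id⟩⟩^{⊗N}. -/
def idN (N : ℕ) : RepIdx N → ℂ := fun f => ∏ i : Fin N, idS (f i)

/-- The product state |swap⟩⟩^{⊗N}. -/
def swapN (N : ℕ) : RepIdx N → ℂ := fun f => ∏ i : Fin N, swapS (f i)

/-- The product basis vector `⊗_{i} |s_i s_i s_i s_i⟩` associated to a bitstring `s`,
as an element of the Euclidean (ℓ²) space on the replica basis. -/
def diagBasis (N : ℕ) (s : Fin N → Fin 2) : EuclideanSpace ℂ (RepIdx N) :=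
  WithLp.toLp 2 (fun f => if f = (fun i _ => s i) then 1 else 0)

/-- The two-dimensional subspace spanned by `|id⟩⟩^{⊗N}` and `|swap⟩⟩^{⊗N}`. -/
def grSpan (N : ℕ) : Submodule ℂ (EuclideanSpace ℂ (RepIdx N)) :=
  Submodule.span ℂ {(WithLp.toLp 2 (idN N) : EuclideanSpace ℂ (RepIdx N)), (WithLp.toLp 2 (swapN N) : EuclideanSpace ℂ (RepIdx N))}

open scoped ComplexConjugate

/- ### Auxiliary lemmas -/

def prodState (N : ℕ) (g : (Fin 4 → Fin 2) → ℂ) : EuclideanSpace ℂ (RepIdx N) :=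
  WithLp.toLp 2 (fun f => ∏ i, g (f i))

lemma idN_eq (N : ℕ) : (WithLp.toLp 2 (idN N) : EuclideanSpace ℂ (RepIdx N)) = prodState N idS := rfl
lemma swapN_eq (N : ℕ) : (WithLp.toLp 2 (swapN N) : EuclideanSpace ℂ (RepIdx N)) = prodState N swapS := rfl

lemma inner_euclid {N : ℕ} (x y : EuclideanSpace ℂ (RepIdx N)) :
    inner (𝕜 := ℂ) x y = ∑ f : RepIdx N, conj (x f) * y f := by
  simp [PiLp.inner_apply, RCLike.inner_apply, mul_comm]

lemma inner_prodState {N : ℕ} (g h : (Fin 4 → Fin 2) → ℂ) :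
    inner (𝕜 := ℂ) (prodState N g) (prodState N h) =
      (∑ x : Fin 4 → Fin 2, conj (g x) * h x) ^ N := by
  rw [inner_euclid]
  have key : ∀ f : RepIdx N, conj (prodState N g f) * (prodState N h f) =
      ∏ i, (conj (g (f i)) * h (f i)) := by
    intro f
    rw [prodState, prodState, PiLp.toLp_apply, PiLp.toLp_apply, map_prod, ← Finset.prod_mul_distrib]
  simp only [key]
  rw [← Fintype.prod_sum (fun (_ : Fin N) (x : Fin 4 → Fin 2) => conj (g x) * h x)]
  rw [Finset.prod_const, Finset.card_univ, Fintype.card_fin]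

lemma sum_pair (p q : (Fin 4 → Fin 2) → Prop) [DecidablePred p] [DecidablePred q]
    (g h : (Fin 4 → Fin 2) → ℂ) (hg : g = fun x => if p x then 1/2 else 0)
    (hh : h = fun x => if q x then 1/2 else 0) :
    ∑ x : Fin 4 → Fin 2, conj (g x) * h x =
      ((Finset.univ.filter (fun x => p x ∧ q x)).card : ℂ) * (1/4) := by
  subst hg hh
  have key : ∀ x : Fin 4 → Fin 2,
      conj (if p x then (1/2:ℂ) else 0) * (if q x then (1/2:ℂ) else 0) =
      if p x ∧ q x then (1/4 : ℂ) else 0 := by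
    intro x
    by_cases hp : p x <;> by_cases hq : q x <;>
      simp [hp, hq, Complex.conj_ofNat] <;> norm_num
  simp only [key, Finset.sum_ite, Finset.sum_const, Finset.sum_const_zero, add_zero,
    nsmul_eq_mul, mul_zero]

lemma sum_ii : ∑ x : Fin 4 → Fin 2, conj (idS x) * idS x = 1 := by
  rw [sum_pair (fun x => x 0 = x 1 ∧ x 2 = x 3) (fun x => x 0 = x 1 ∧ x 2 = x 3)
    idS idS rfl rfl]
  have : (Finset.univ.filter (fun x : Fin 4 → Fin 2 =>
      (x 0 = x 1 ∧ x 2 = x 3) ∧ (x 0 = x 1 ∧ x 2 = x 3))).card = 4 := by decide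
  rw [this]; norm_num

lemma sum_is : ∑ x : Fin 4 → Fin 2, conj (idS x) * swapS x = 1/2 := by
  rw [sum_pair (fun x => x 0 = x 1 ∧ x 2 = x 3) (fun x => x 0 = x 3 ∧ x 1 = x 2)
    idS swapS rfl rfl]
  have : (Finset.univ.filter (fun x : Fin 4 → Fin 2 =>
      (x 0 = x 1 ∧ x 2 = x 3) ∧ (x 0 = x 3 ∧ x 1 = x 2))).card = 2 := by decide
  rw [this]; norm_num

lemma sum_si : ∑ x : Fin 4 → Fin 2, conj (swapS x) * idS x = 1/2 := by
  rw [sum_pair (fun x => x 0 = x 3 ∧ x 1 = x 2) (fun x => x 0 = x 1 ∧ x 2 = x 3)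
    swapS idS rfl rfl]
  have : (Finset.univ.filter (fun x : Fin 4 → Fin 2 =>
      (x 0 = x 3 ∧ x 1 = x 2) ∧ (x 0 = x 1 ∧ x 2 = x 3))).card = 2 := by decide
  rw [this]; norm_num

lemma sum_ss : ∑ x : Fin 4 → Fin 2, conj (swapS x) * swapS x = 1 := by
  rw [sum_pair (fun x => x 0 = x 3 ∧ x 1 = x 2) (fun x => x 0 = x 3 ∧ x 1 = x 2)
    swapS swapS rfl rfl]
  have : (Finset.univ.filter (fun x : Fin 4 → Fin 2 =>
      (x 0 = x 3 ∧ x 1 = x 2) ∧ (x 0 = x 3 ∧ x 1 = x 2))).card = 4 := by decide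
  rw [this]; norm_num

lemma inner_diag {N : ℕ} (s : Fin N → Fin 2) (w : EuclideanSpace ℂ (RepIdx N)) :
    inner (𝕜 := ℂ) (diagBasis N s) w = w (fun i _ => s i) := by
  rw [inner_euclid]
  have key : ∀ f : RepIdx N, conj (diagBasis N s f) * w f =
      if f = (fun i _ => s i) then w f else 0 := by
    intro f
    rw [diagBasis, PiLp.toLp_apply]
    split <;> simp
  simp only [key]
  rw [Finset.sum_ite_eq' Finset.univ (fun i _ => s i) w]
  simp

lemma prodState_diag {N : ℕ} (g : (Fin 4 → Fin 2) → ℂ) (s : Fin N → Fin 2)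
    (hg : ∀ c : Fin 2, g (fun _ => c) = 1/2) :
    prodState N g (fun i _ => s i) = (1/2 : ℂ) ^ N := by
  rw [prodState, PiLp.toLp_apply]
  simp only [hg]
  rw [Finset.prod_const, Finset.card_univ, Fintype.card_fin]

lemma idS_const (c : Fin 2) : idS (fun _ => c) = 1/2 := by simp [idS]
lemma swapS_const (c : Fin 2) : swapS (fun _ => c) = 1/2 := by simp [swapS]

lemma proj_eq (N : ℕ) :
    (Submodule.orthogonalProjectionOnto (grSpan N) (diagBasis N (fun _ => 0)) :
        EuclideanSpace ℂ (RepIdx N)) =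
      ((1/2:ℂ)^N / (1 + (1/2:ℂ)^N)) • prodState N idS +
      ((1/2:ℂ)^N / (1 + (1/2:ℂ)^N)) • prodState N swapS := by
  set c : ℂ := (1/2:ℂ)^N with hc
  set α : ℂ := c / (1 + c) with hα
  have hc1 : (1:ℂ) + c ≠ 0 := by
    have h1 : ((1:ℝ) + (1/2:ℝ)^N) ≠ 0 := by positivity
    have : (1:ℂ) + c = (((1:ℝ) + (1/2:ℝ)^N : ℝ) : ℂ) := by
      push_cast [hc]; norm_num
    rw [this]
    exact_mod_cast Complex.ofReal_ne_zero.mpr h1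
  have hcr : conj c = c := by
    rw [hc]
    rw [map_pow, map_div₀, _root_.map_one, Complex.conj_ofNat]
  have hαr : conj α = α := by
    rw [hα, map_div₀, hcr, map_add, _root_.map_one, hcr]
  set v : EuclideanSpace ℂ (RepIdx N) :=
    α • prodState N idS + α • prodState N swapS with hv
  have hvm : v ∈ grSpan N := by
    apply Submodule.add_mem <;> apply Submodule.smul_mem <;>
      apply Submodule.subset_span
    · rw [← idN_eq]; exact Set.mem_insert _ _
    · rw [← swapN_eq]; exact Set.mem_insert_of_mem _ rfl
  have h_ii : inner (𝕜 := ℂ) (prodState N idS) (prodState N idS) = 1 := by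
    rw [inner_prodState, sum_ii, one_pow]
  have h_is : inner (𝕜 := ℂ) (prodState N idS) (prodState N swapS) = c := by
    rw [inner_prodState, sum_is, hc]
  have h_si : inner (𝕜 := ℂ) (prodState N swapS) (prodState N idS) = c := by
    rw [inner_prodState, sum_si, hc]
  have h_ss : inner (𝕜 := ℂ) (prodState N swapS) (prodState N swapS) = 1 := by
    rw [inner_prodState, sum_ss, one_pow]
  have h_e_i : inner (𝕜 := ℂ) (diagBasis N (fun _ => 0)) (prodState N idS) = c := by
    rw [inner_diag, prodState_diag idS _ idS_const, hc]
  have h_e_s : inner (𝕜 := ℂ) (diagBasis N (fun _ => 0)) (prodState N swapS) = c := by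
    rw [inner_diag, prodState_diag swapS _ swapS_const, hc]
  apply Submodule.eq_starProjection_of_mem_of_inner_eq_zero hvm
  intro w hw
  induction hw using Submodule.span_induction with
  | mem x hx =>
    rcases hx with h | h
    · subst h
      rw [idN_eq, inner_sub_left, hv, inner_add_left, inner_smul_left,
        inner_smul_left, h_ii, h_si, h_e_i, hαr]
      rw [hα]
      field_simp
      ring
    · rw [Set.mem_singleton_iff] at h
      subst h
      rw [swapN_eq, inner_sub_left, hv, inner_add_left, inner_smul_left,
        inner_smul_left, h_is, h_ss, h_e_s, hαr]
      rw [hα]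
      field_simp
      ring
  | zero => rw [inner_zero_right]
  | add x y _ _ hx hy => rw [inner_add_right, hx, hy, add_zero]
  | smul a x _ hx => rw [inner_smul_right, hx, mul_zero]

/-- with `P` the orthogonal projection onto `span{|id⟩⟩^{⊗N}, |swap⟩⟩^{⊗N}}`,
`2^N · Σ_{s∈{0,1}^N} ⟨(⊗_i |s_i s_i s_i s_i⟩), P(|0000⟩^{⊗N})⟩ = 2/(1 + 2^{-N})`. -/
theorem stmt8 (N : ℕ) :
    (2 : ℂ) ^ N *
      ∑ s : Fin N → Fin 2,
        inner (𝕜 := ℂ) (diagBasis N s)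
          ((Submodule.orthogonalProjectionOnto (grSpan N) (diagBasis N (fun _ => 0)) :
            EuclideanSpace ℂ (RepIdx N))) =
    2 / (1 + (2 : ℂ) ^ (-(N : ℤ))) := by
  set c : ℂ := (1/2:ℂ)^N with hc
  set α : ℂ := c / (1 + c) with hα
  have hterm : ∀ s : Fin N → Fin 2,
      inner (𝕜 := ℂ) (diagBasis N s)
        ((Submodule.orthogonalProjectionOnto (grSpan N) (diagBasis N (fun _ => 0)) :
          EuclideanSpace ℂ (RepIdx N))) = α * c + α * c := by
    intro s
    rw [proj_eq, inner_diag]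
    have h1 : (α • prodState N idS + α • prodState N swapS) (fun i _ => s i)
        = α * prodState N idS (fun i _ => s i) + α * prodState N swapS (fun i _ => s i) := rfl
    rw [h1, prodState_diag idS _ idS_const, prodState_diag swapS _ swapS_const, ← hc]
  simp only [hterm]
  rw [Finset.sum_const, Finset.card_univ]
  have hcard : Fintype.card (Fin N → Fin 2) = 2 ^ N := by
    simp [Fintype.card_fun]
  rw [hcard, nsmul_eq_mul]
  push_cast
  have hm : (2:ℂ)^N * c = 1 := by
    rw [hc, ← mul_pow]; norm_num
  have hc2 : c = (2:ℂ) ^ (-(N:ℤ)) := by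
    rw [_root_.zpow_neg, zpow_natCast, hc, one_div, inv_pow]
  rw [← hc2]
  rw [hα]
  have key : (2:ℂ)^N * ((2:ℂ)^N * (c/(1+c) * c + c/(1+c) * c)) =
      ((2:ℂ)^N * c) * ((2:ℂ)^N * c) * (2 / (1+c)) := by
    ring
  rw [key, hm]
  ring

end
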